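/- Under the gauge transformation δT_{αβγ} = ∂_α α_{βγ} - ∂_β α_{αγ} - 2∂_γ α_{αβ} with α antisymmetric (α_{αβ} = -α_{βα}), the field strength F_{αβγδ} = 3∂_{[α}T_{βγ]δ} transforms as δF_{αβγδ} = -2∂_δ ∂_{[α}α_{βγ]}·3, i.e. δF_{αβγδ} = -6 ∂_δ ∂_{[α}α_{βγ]}; in particular F is not invariant unless ∂_{[α}α_{βγ]} is constant in δ-direction, but the curvature E_{αβγ,εδ} := (1/2)(∂_ε F_{αβγδ} - ∂_δ F_{αβγε}) is invariant under this transformation. -/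

import Mathlib

open scoped BigOperators

/-- Partial derivative in the μ-th coordinate direction on ℝ^D. -/
noncomputable def pd {D : ℕ} (μ : Fin D) (f : (Fin D → ℝ) → ℝ) : (Fin D → ℝ) → ℝ :=
  fun x => fderiv ℝ f x (Pi.single μ 1)

/-- Weight-one antisymmetrization over three indices. -/
noncomputable def alt3 {D : ℕ} (f : Fin D → Fin D → Fin D → ℝ) (a b c : Fin D) : ℝ :=
  (1/6) * (f a b c - f b a c + f b c a - f c b a + f c a b - f a c b)

/-- Weight-one antisymmetrization over four indices. -/
noncomputable def alt4 {D : ℕ} (f : Fin D → Fin D → Fin D → Fin D → ℝ)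
    (a b c d : Fin D) : ℝ :=
  (1/24) * ∑ σ : Equiv.Perm (Fin 4),
    ((Equiv.Perm.sign σ : ℤ) : ℝ) *
      f (![a,b,c,d] (σ 0)) (![a,b,c,d] (σ 1)) (![a,b,c,d] (σ 2)) (![a,b,c,d] (σ 3))

/-- Minkowski metric (mostly plus) on ℝ^D; numerically equal to its inverse. -/
noncomputable def eta (D : ℕ) : Fin D → Fin D → ℝ := fun μ ν =>
  if μ = ν then (if (μ : ℕ) = 0 then -1 else 1) else 0

section helpers

variable {D : ℕ}

lemma pd_smooth {f : (Fin D → ℝ) → ℝ} (hf : ContDiff ℝ (⊤ : ℕ∞) f) (μ : Fin D) :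
    ContDiff ℝ (⊤ : ℕ∞) (pd μ f) := by
  have h1 : ContDiff ℝ (⊤ : ℕ∞) (fderiv ℝ f) := hf.fderiv_right (by exact_mod_cast le_top)
  exact h1.clm_apply contDiff_const

lemma pd_add {f g : (Fin D → ℝ) → ℝ} (hf : Differentiable ℝ f) (hg : Differentiable ℝ g)
    (μ : Fin D) (x : Fin D → ℝ) :
    pd μ (fun y => f y + g y) x = pd μ f x + pd μ g x := by
  simp [pd, fderiv_fun_add (hf x) (hg x)]

lemma pd_sub {f g : (Fin D → ℝ) → ℝ} (hf : Differentiable ℝ f) (hg : Differentiable ℝ g)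
    (μ : Fin D) (x : Fin D → ℝ) :
    pd μ (fun y => f y - g y) x = pd μ f x - pd μ g x := by
  simp [pd, fderiv_fun_sub (hf x) (hg x)]

lemma pd_const_mul {f : (Fin D → ℝ) → ℝ} (hf : Differentiable ℝ f) (c : ℝ)
    (μ : Fin D) (x : Fin D → ℝ) :
    pd μ (fun y => c * f y) x = c * pd μ f x := by
  simp [pd, fderiv_const_mul (hf x) c]

lemma pd_neg (f : (Fin D → ℝ) → ℝ) (μ : Fin D) (x : Fin D → ℝ) :
    pd μ (fun y => -(f y)) x = -(pd μ f x) := by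
  simp [pd, fderiv_neg]

lemma pd_comm {f : (Fin D → ℝ) → ℝ} (hf : ContDiff ℝ (⊤ : ℕ∞) f) (μ ν : Fin D)
    (x : Fin D → ℝ) :
    pd μ (pd ν f) x = pd ν (pd μ f) x := by
  have hd : ContDiff ℝ (⊤ : ℕ∞) (fderiv ℝ f) := hf.fderiv_right (by exact_mod_cast le_top)
  have key : ∀ (v w : Fin D → ℝ),
      fderiv ℝ (fun y => fderiv ℝ f y v) x w = fderiv ℝ (fderiv ℝ f) x w v := by
    intro v w
    have h := fderiv_clm_apply (hd.differentiable (by simp) x) (differentiableAt_const v)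
    simp only [fderiv_fun_const, Pi.zero_apply, ContinuousLinearMap.comp_zero, zero_add] at h
    simp [h]
  have hsymm : IsSymmSndFDerivAt ℝ f x := by
    apply hf.contDiffAt.isSymmSndFDerivAt
    have h2 : (2 : WithTop ℕ∞) = ((2:ℕ∞) : WithTop ℕ∞) := rfl
    rw [h2]
    rw [minSmoothness_of_isRCLikeNormedField]
    exact WithTop.coe_le_coe.mpr le_top
  show fderiv ℝ (fun y => fderiv ℝ f y (Pi.single ν 1)) x (Pi.single μ 1)
      = fderiv ℝ (fun y => fderiv ℝ f y (Pi.single μ 1)) x (Pi.single ν 1)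
  rw [key, key, hsymm]

lemma pd_congr {f g : (Fin D → ℝ) → ℝ} (h : ∀ y, f y = g y) (μ : Fin D) (x : Fin D → ℝ) :
    pd μ f x = pd μ g x := by
  have : f = g := funext h
  rw [this]

/-- abbreviation for ∂ₚ a_{qr} -/
noncomputable def pdA {D : ℕ} (a : (Fin D → ℝ) → Fin D → Fin D → ℝ)
    (p q r : Fin D) : (Fin D → ℝ) → ℝ :=
  pd p (fun z => a z q r)

end helpers

theorem field_strength_variation_under_alpha_gauge_and_curvature_invariance
    {D : ℕ} (a : (Fin D → ℝ) → Fin D → Fin D → ℝ)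
    (hasmooth : ∀ α β, ContDiff ℝ (⊤ : ℕ∞) (fun x => a x α β))
    (haanti : ∀ x α β, a x α β = - a x β α)
    (δT : (Fin D → ℝ) → Fin D → Fin D → Fin D → ℝ)
    (hδT : ∀ x α β γ, δT x α β γ =
      pd α (fun y => a y β γ) x - pd β (fun y => a y α γ) x
        - 2 * pd γ (fun y => a y α β) x)
    (δF : (Fin D → ℝ) → Fin D → Fin D → Fin D → Fin D → ℝ)
    (hδF : ∀ x α β γ δ, δF x α β γ δ =
      pd α (fun y => δT y β γ δ) x + pd β (fun y => δT y γ α δ) x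
        + pd γ (fun y => δT y α β δ) x)
    (δE : (Fin D → ℝ) → Fin D → Fin D → Fin D → Fin D → Fin D → ℝ)
    (hδE : ∀ x α β γ ε δ, δE x α β γ ε δ =
      (1/2) * (pd ε (fun y => δF y α β γ δ) x - pd δ (fun y => δF y α β γ ε) x)) :
    (∀ x α β γ δ, δF x α β γ δ =
      -6 * pd δ (fun y => alt3 (fun p q r => pd p (fun z => a z q r) y) α β γ) x)
    ∧ (∀ x α β γ ε δ, δE x α β γ ε δ = 0) := by
  -- basic facts about A p q r := ∂ₚ a_{qr}
  have hA : ∀ p q r, ContDiff ℝ (⊤ : ℕ∞) (pdA a p q r) :=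
    fun p q r => pd_smooth (hasmooth q r) p
  have hAd : ∀ p q r, Differentiable ℝ (pdA a p q r) :=
    fun p q r => (hA p q r).differentiable (by simp)
  have hAanti : ∀ p q r y, pdA a p q r y = -(pdA a p r q y) := by
    intro p q r y
    have : (fun z => a z q r) = fun z => -(a z r q) := funext fun z => haanti z q r
    rw [pdA, this, show pd p (fun z => -(a z r q)) y = -(pd p (fun z => a z r q) y)
      from pd_neg (fun z => a z r q) p y]
    rfl
  have hcomm : ∀ μ ν q r x, pd μ (pdA a ν q r) x = pd ν (pdA a μ q r) x :=
    fun μ ν q r x => pd_comm (hasmooth q r) μ ν x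
  -- derivative of δT
  have hpdδT : ∀ (μ p q r : Fin D) x, pd μ (fun y => δT y p q r) x
      = pd μ (pdA a p q r) x - pd μ (pdA a q p r) x - 2 * pd μ (pdA a r p q) x := by
    intro μ p q r x
    rw [pd_congr (g := fun y => (pdA a p q r y - pdA a q p r y) - 2 * pdA a r p q y)
      (fun y => hδT y p q r) μ x]
    rw [pd_sub ((hAd p q r).fun_sub (hAd q p r)) ((hAd r p q).const_mul 2) μ x,
      pd_sub (hAd p q r) (hAd q p r) μ x, pd_const_mul (hAd r p q) 2 μ x]
  -- the value of δF
  have hδF2 : ∀ x α β γ δ, δF x α β γ δ =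
      -2 * pd δ (fun y => pdA a α β γ y + pdA a β γ α y + pdA a γ α β y) x := by
    intro x α β γ δ
    rw [hδF, hpdδT, hpdδT, hpdδT]
    rw [pd_add ((hAd α β γ).fun_add (hAd β γ α)) (hAd γ α β) δ x,
      pd_add (hAd α β γ) (hAd β γ α) δ x]
    rw [hcomm α γ β δ x, hcomm β α γ δ x, hcomm γ β α δ x,
      hcomm α δ β γ x, hcomm β δ γ α x, hcomm γ δ α β x]
    ring
  constructor
  · intro x α β γ δ
    have halt : ∀ y, alt3 (fun p q r => pd p (fun z => a z q r) y) α β γ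
        = (1/3) * (pdA a α β γ y + pdA a β γ α y + pdA a γ α β y) := by
      intro y
      have h1 := hAanti β α γ y
      have h2 := hAanti γ β α y
      have h3 := hAanti α γ β y
      simp only [alt3, pdA] at *
      rw [h1, h2, h3]; ring
    rw [pd_congr (f := fun y => alt3 (fun p q r => pd p (fun z => a z q r) y) α β γ)
      halt δ x]
    rw [pd_const_mul (((hAd α β γ).fun_add (hAd β γ α)).fun_add (hAd γ α β)) (1/3) δ x]
    rw [hδF2]
    rw [pd_add ((hAd α β γ).fun_add (hAd β γ α)) (hAd γ α β) δ x,
      pd_add (hAd α β γ) (hAd β γ α) δ x]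
    ring
  · intro x α β γ ε δ
    set S : (Fin D → ℝ) → ℝ := fun y => pdA a α β γ y + pdA a β γ α y + pdA a γ α β y with hSdef
    have hSsmooth : ContDiff ℝ (⊤ : ℕ∞) S :=
      (((hA α β γ).add (hA β γ α)).add (hA γ α β))
    have hpdS : ∀ μ, Differentiable ℝ (pd μ S) :=
      fun μ => (pd_smooth hSsmooth μ).differentiable (by simp)
    have h1 : pd ε (fun y => δF y α β γ δ) x = -2 * pd ε (pd δ S) x := by
      rw [pd_congr (g := fun y => -2 * pd δ S y) (fun y => hδF2 y α β γ δ) ε x]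
      exact pd_const_mul ((pd_smooth hSsmooth δ).differentiable (by simp)) (-2) ε x
    have h2 : pd δ (fun y => δF y α β γ ε) x = -2 * pd δ (pd ε S) x := by
      rw [pd_congr (g := fun y => -2 * pd ε S y) (fun y => hδF2 y α β γ ε) δ x]
      exact pd_const_mul ((pd_smooth hSsmooth ε).differentiable (by simp)) (-2) δ x
    rw [hδE, h1, h2, pd_comm hSsmooth ε δ x]
    ring
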